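/- If N : ℝ^{m(n_M+1)} → ℝ^m is a contraction in the sup-block norm with constant c < 1/(n_M+1) around a fixed point, i.e., ‖N(x_0,…,x_{n_M}) − z*‖ ≤ c Σ_{i=0}^{n_M} ‖x_i − z*‖ where z* = N(z*,…,z*), then every trajectory of z_{n+1} = N(z_n,…,z_{n−n_M}) converges to z*: ‖z_n − z*‖ → 0 as n → ∞. -/
import Mathlib


/-- If `N` is a contraction around a fixed point `z*` in the sense
`‖N(x₀,…,x_{n_M}) − z*‖ ≤ c Σᵢ ‖xᵢ − z*‖` with `0 ≤ c` and `c(n_M+1) < 1`, then every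
trajectory of `z_{n+1} = N(zₙ,…,z_{n−n_M})` converges to `z*`. -/
theorem memory_contraction_convergence (m nM : ℕ) (hm : 1 ≤ m)
    (zs : Fin m → ℝ) (c : ℝ) (hc0 : 0 ≤ c) (hc1 : c * (nM + 1) < 1)
    (N : (Fin (nM + 1) → (Fin m → ℝ)) → (Fin m → ℝ))
    (hfix : N (fun _ => zs) = zs)
    (hcontr : ∀ x : Fin (nM + 1) → (Fin m → ℝ),
      ‖N x - zs‖ ≤ c * ∑ i : Fin (nM + 1), ‖x i - zs‖)
    (z : ℕ → (Fin m → ℝ))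
    (hrec : ∀ n : ℕ, nM ≤ n → z (n + 1) = N (fun i => z (n - (i : ℕ)))) :
    Filter.Tendsto (fun n : ℕ => ‖z n - zs‖) Filter.atTop (nhds 0) := by
  set q : ℝ := c * ((nM : ℝ) + 1) with hq
  have hq0 : 0 ≤ q := by positivity
  have hq1 : q < 1 := hc1
  set a : ℕ → ℝ := fun n => ‖z n - zs‖ with ha
  have ha0 : ∀ n, 0 ≤ a n := fun n => norm_nonneg _
  set B : ℝ := ∑ i ∈ Finset.range (nM + 1), a i with hB
  have hB0 : 0 ≤ B := Finset.sum_nonneg fun i _ => ha0 i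
  have haB : ∀ i, i ≤ nM → a i ≤ B := by
    intro i hi
    exact Finset.single_le_sum (f := a) (fun j _ => ha0 j)
      (Finset.mem_range.2 (Nat.lt_succ_of_le hi))
  have key : ∀ j n, j * (nM + 1) ≤ n → a n ≤ q ^ j * B := by
    intro j
    induction j with
    | zero =>
      intro n _
      simp only [pow_zero, one_mul]
      induction n using Nat.strong_induction_on with
      | _ n ih =>
        rcases le_or_gt n nM with h | h
        · exact haB n h
        · obtain ⟨n', rfl⟩ : ∃ n', n = n' + 1 := ⟨n - 1, by omega⟩
          have hn' : nM ≤ n' := by omega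
          show ‖z (n' + 1) - zs‖ ≤ B
          rw [hrec n' hn']
          calc ‖N (fun i => z (n' - (i : ℕ))) - zs‖
              ≤ c * ∑ i : Fin (nM + 1), ‖z (n' - (i : ℕ)) - zs‖ := hcontr _
            _ ≤ c * ∑ _i : Fin (nM + 1), B := by
                gcongr with i _
                exact ih (n' - (i : ℕ)) (by omega) (by omega)
            _ = q * B := by
                rw [Finset.sum_const]
                simp [hq]
                ring
            _ ≤ 1 * B := by gcongr
            _ = B := one_mul B
    | succ j IH =>
      intro n hn
      have ht : (j + 1) * (nM + 1) = j * (nM + 1) + (nM + 1) := by ring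
      obtain ⟨n', rfl⟩ : ∃ n', n = n' + 1 := ⟨n - 1, by omega⟩
      have hn' : nM ≤ n' := by omega
      show ‖z (n' + 1) - zs‖ ≤ q ^ (j + 1) * B
      rw [hrec n' hn']
      calc ‖N (fun i => z (n' - (i : ℕ))) - zs‖
          ≤ c * ∑ i : Fin (nM + 1), ‖z (n' - (i : ℕ)) - zs‖ := hcontr _
        _ ≤ c * ∑ _i : Fin (nM + 1), q ^ j * B := by
            gcongr with i _
            have hi : (i : ℕ) ≤ nM := Nat.lt_succ_iff.mp i.isLt
            exact IH (n' - (i : ℕ)) (by omega)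
        _ = q ^ (j + 1) * B := by
            rw [Finset.sum_const]
            simp [hq]
            ring
  have hbound : ∀ n, a n ≤ q ^ (n / (nM + 1)) * B := fun n =>
    key _ n (Nat.div_mul_le_self n (nM + 1))
  have h2 : Filter.Tendsto (fun n : ℕ => n / (nM + 1)) Filter.atTop Filter.atTop :=
    Filter.tendsto_atTop_atTop.2 fun b =>
      ⟨b * (nM + 1), fun n hn => (Nat.le_div_iff_mul_le (Nat.succ_pos nM)).2 hn⟩
  have h1 : Filter.Tendsto (fun k : ℕ => q ^ k * B) Filter.atTop (nhds 0) := by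
    simpa using (tendsto_pow_atTop_nhds_zero_of_lt_one hq0 hq1).mul_const B
  have htend : Filter.Tendsto (fun n : ℕ => q ^ (n / (nM + 1)) * B) Filter.atTop (nhds 0) :=
    h1.comp h2
  exact squeeze_zero ha0 hbound htend
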